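/- arXiv:2403.19867 — 3 statements merged into one kernel-verified Lean document; each statement's English description precedes it below -/
import Mathlib

section
/- Fix integers m, N ≥ 1, observations x_1,…,x_m ∈ {1,…,N}, a real M ≥ 0, and labels y_1,…,y_m with 0 ≤ y_i ≤ M for all i. Let 0 ≤ j < j' ≤ N, suppose at least one i satisfies x_i ≤ j, and let b = #{i : j < x_i ≤ j'}. Then L(j') ≤ L(j) + 5bM²/(4m), where L is the mean squared error of a split. -/
open Finset

lemma sum_sq_mean_le {α : Type*} (s : Finset α) (y : α → ℝ) (hs : s.Nonempty) (c : ℝ) :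
    ∑ i ∈ s, (y i - (∑ i ∈ s, y i) / s.card) ^ 2 ≤ ∑ i ∈ s, (y i - c) ^ 2 := by
  have hn : (0:ℝ) < s.card := by exact_mod_cast Finset.card_pos.mpr hs
  set μ := (∑ i ∈ s, y i) / s.card with hμdef
  have hsum : ∑ i ∈ s, (y i - μ) = 0 := by
    rw [Finset.sum_sub_distrib, Finset.sum_const, nsmul_eq_mul, hμdef]
    field_simp
    ring
  have expand : ∀ i ∈ s, (y i - c)^2 = (y i - μ)^2 + (2*(μ - c)) * (y i - μ) + (μ - c)^2 := by
    intro i _; ring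
  rw [Finset.sum_congr rfl expand, Finset.sum_add_distrib, Finset.sum_add_distrib,
      ← Finset.mul_sum, hsum, Finset.sum_const, nsmul_eq_mul]
  nlinarith [sq_nonneg (μ - c), hn]

lemma mean_bounds {α : Type*} (s : Finset α) (y : α → ℝ) (hs : s.Nonempty) (M : ℝ)
    (h0 : ∀ i, 0 ≤ y i) (h1 : ∀ i, y i ≤ M) :
    0 ≤ (∑ i ∈ s, y i) / s.card ∧ (∑ i ∈ s, y i) / s.card ≤ M := by
  have hn : (0:ℝ) < s.card := by exact_mod_cast Finset.card_pos.mpr hs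
  constructor
  · apply div_nonneg _ hn.le
    exact Finset.sum_nonneg fun i _ => h0 i
  · rw [div_le_iff₀ hn]
    calc ∑ i ∈ s, y i ≤ ∑ _i ∈ s, M := Finset.sum_le_sum fun i _ => h1 i
    _ = M * s.card := by rw [Finset.sum_const, nsmul_eq_mul]; ring

/-- Shifting the regression split from `j` to `j' > j` increases the mean squared
error by at most `5bM²/(4m)`, where `b` is the number of observations strictly
between the two splits (Lemma 2 of the paper). -/
theorem regression_split_shift
    (m N : ℕ) (hm : 1 ≤ m) (hN : 1 ≤ N)
    (x : Fin m → ℕ) (hx : ∀ i, 1 ≤ x i ∧ x i ≤ N)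
    (M : ℝ) (hM : 0 ≤ M)
    (y : Fin m → ℝ) (hy : ∀ i, 0 ≤ y i ∧ y i ≤ M)
    (j j' : ℕ) (hjj' : j < j') (hj'N : j' ≤ N)
    (μ γ L : ℕ → ℝ)
    (hμ : ∀ k : ℕ, ({i : Fin m | x i ≤ k} : Finset (Fin m)).Nonempty →
      μ k = (∑ i ∈ ({i : Fin m | x i ≤ k} : Finset (Fin m)), y i) /
            (({i : Fin m | x i ≤ k} : Finset (Fin m)).card : ℝ))
    (hγ : ∀ k : ℕ, ({i : Fin m | k < x i} : Finset (Fin m)).Nonempty →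
      γ k = (∑ i ∈ ({i : Fin m | k < x i} : Finset (Fin m)), y i) /
            (({i : Fin m | k < x i} : Finset (Fin m)).card : ℝ))
    (hL : ∀ k : ℕ, L k = (1 / (m : ℝ)) *
      ((∑ i ∈ ({i : Fin m | x i ≤ k} : Finset (Fin m)), (y i - μ k) ^ 2) +
       (∑ i ∈ ({i : Fin m | k < x i} : Finset (Fin m)), (y i - γ k) ^ 2)))
    (hleft : ({i : Fin m | x i ≤ j} : Finset (Fin m)).Nonempty)
    (b : ℕ) (hb : b = ({i : Fin m | j < x i ∧ x i ≤ j'} : Finset (Fin m)).card) :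
    L j' ≤ L j + 5 * (b : ℝ) * M ^ 2 / (4 * (m : ℝ)) := by
  classical
  set A := ({i : Fin m | x i ≤ j} : Finset (Fin m)) with hA
  set AB := ({i : Fin m | x i ≤ j'} : Finset (Fin m)) with hAB
  set BC := ({i : Fin m | j < x i} : Finset (Fin m)) with hBC
  set C := ({i : Fin m | j' < x i} : Finset (Fin m)) with hC
  set B := ({i : Fin m | j < x i ∧ x i ≤ j'} : Finset (Fin m)) with hB
  have hm0 : (0:ℝ) < m := by exact_mod_cast hm
  have hABu : AB = A ∪ B := by
    ext i; simp only [hA, hAB, hB, Finset.mem_filter, Finset.mem_union, Finset.mem_univ,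
      true_and]; omega
  have hABd : Disjoint A B := by
    rw [Finset.disjoint_left]; intro i hi hi'
    simp only [hA, hB, Finset.mem_filter, Finset.mem_univ, true_and] at hi hi'; omega
  have hBCu : BC = B ∪ C := by
    ext i; simp only [hC, hBC, hB, Finset.mem_filter, Finset.mem_union, Finset.mem_univ,
      true_and]; omega
  have hBCd : Disjoint B C := by
    rw [Finset.disjoint_left]; intro i hi hi'
    simp only [hC, hB, Finset.mem_filter, Finset.mem_univ, true_and] at hi hi'; omega
  have keyAB : ∀ f : Fin m → ℝ, ∑ i ∈ AB, f i = ∑ i ∈ A, f i + ∑ i ∈ B, f i := by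
    intro f; rw [hABu, Finset.sum_union hABd]
  have keyBC : ∀ f : Fin m → ℝ, ∑ i ∈ BC, f i = ∑ i ∈ B, f i + ∑ i ∈ C, f i := by
    intro f; rw [hBCu, Finset.sum_union hBCd]
  have hABne : AB.Nonempty := by
    apply hleft.mono
    rw [hABu]; exact Finset.subset_union_left
  -- Step 1
  have step1 : ∑ i ∈ AB, (y i - μ j') ^ 2 ≤ ∑ i ∈ AB, (y i - μ j) ^ 2 := by
    rw [hμ j' hABne]
    exact sum_sq_mean_le AB y hABne (μ j)
  -- Step 2
  have step2 : ∑ i ∈ C, (y i - γ j') ^ 2 ≤ ∑ i ∈ C, (y i - γ j) ^ 2 := by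
    rcases C.eq_empty_or_nonempty with h | h
    · simp [h]
    · rw [hγ j' h]
      exact sum_sq_mean_le C y h (γ j)
  -- μ j bounds
  have hμj := hμ j hleft
  obtain ⟨hμ0, hμ1⟩ := mean_bounds A y hleft M (fun i => (hy i).1) (fun i => (hy i).2)
  rw [← hμj] at hμ0 hμ1
  -- Step 3
  have step3 : ∑ i ∈ B, (y i - μ j) ^ 2 ≤ (b:ℝ) * M ^ 2 := by
    calc ∑ i ∈ B, (y i - μ j) ^ 2 ≤ ∑ _i ∈ B, M ^ 2 := by
          apply Finset.sum_le_sum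
          intro i _
          nlinarith [(hy i).1, (hy i).2]
      _ = (b:ℝ) * M ^ 2 := by
          rw [Finset.sum_const, nsmul_eq_mul, hb]
  have hbM : (0:ℝ) ≤ (b:ℝ) * M ^ 2 := by positivity
  have hrw : 5 * (b:ℝ) * M ^ 2 / (4 * m) = (1/(m:ℝ)) * (5 * b * M ^ 2 / 4) := by
    ring
  rw [hL j, hL j', hrw, keyBC (fun i => (y i - γ j) ^ 2), ← mul_add]
  apply mul_le_mul_of_nonneg_left _ (by positivity)
  rw [keyAB (fun i => (y i - μ j) ^ 2)] at step1
  have hB2 : (0:ℝ) ≤ ∑ i ∈ B, (y i - γ j) ^ 2 :=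
    Finset.sum_nonneg fun i _ => sq_nonneg _
  linarith
end

section
/- Fix integers m, N ≥ 1, observations x_1,…,x_m ∈ {1,…,N}, real labels y_1,…,y_m, and real thresholds z_left, z_right. Suppose some j ∈ {0,1,…,N} satisfies Error_left(j) > z_left and Error_right(j) > z_right. Then no j' ∈ {0,1,…,N} satisfies both Error_left(j') ≤ z_left and Error_right(j') ≤ z_right. -/
open Finset

lemma mean_min_aux {m : ℕ} (S : Finset (Fin m)) (y : Fin m → ℝ) (c : ℝ) :
    ∑ i ∈ S, (y i - (∑ i ∈ S, y i) / (S.card : ℝ)) ^ 2 ≤ ∑ i ∈ S, (y i - c) ^ 2 := by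
  rcases S.eq_empty_or_nonempty with rfl | hS
  · simp
  · set n : ℝ := (S.card : ℝ) with hn
    have hnpos : 0 < n := by positivity
    set μ : ℝ := (∑ i ∈ S, y i) / n with hμ
    have hsum : ∑ i ∈ S, y i = n * μ := by
      rw [hμ]; field_simp [hnpos.ne']
    have key : ∑ i ∈ S, ((y i - c) ^ 2 - (y i - μ) ^ 2)
        = 2 * (μ - c) * (∑ i ∈ S, y i) + n * (c ^ 2 - μ ^ 2) := by
      have h : ∀ i ∈ S, (y i - c) ^ 2 - (y i - μ) ^ 2
          = 2 * (μ - c) * y i + (c ^ 2 - μ ^ 2) := fun i _ => by ring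
      rw [Finset.sum_congr rfl h, Finset.sum_add_distrib, ← Finset.mul_sum,
        Finset.sum_const, nsmul_eq_mul]
    have key2 : ∑ i ∈ S, ((y i - c) ^ 2 - (y i - μ) ^ 2) = n * (μ - c) ^ 2 := by
      rw [key, hsum]; ring
    have hd : ∑ i ∈ S, ((y i - c) ^ 2 - (y i - μ) ^ 2)
        = (∑ i ∈ S, (y i - c) ^ 2) - ∑ i ∈ S, (y i - μ) ^ 2 :=
      Finset.sum_sub_distrib _ _
    nlinarith [sq_nonneg (μ - c)]

/-- If some split `j` has left squared error exceeding `z_left` and right squared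
error exceeding `z_right`, then no split is feasible for the guess
`(z_left, z_right)`: the guess can be discarded. -/
theorem regression_infeasible_guess
    (m N : ℕ) (hm : 1 ≤ m) (hN : 1 ≤ N)
    (x : Fin m → ℕ) (hx : ∀ i, 1 ≤ x i ∧ x i ≤ N)
    (y : Fin m → ℝ)
    (zleft zright : ℝ)
    (μ γ : ℕ → ℝ)
    (hμ : ∀ k : ℕ, ({i : Fin m | x i ≤ k} : Finset (Fin m)).Nonempty →
      μ k = (∑ i ∈ ({i : Fin m | x i ≤ k} : Finset (Fin m)), y i) /
            (({i : Fin m | x i ≤ k} : Finset (Fin m)).card : ℝ))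
    (hγ : ∀ k : ℕ, ({i : Fin m | k < x i} : Finset (Fin m)).Nonempty →
      γ k = (∑ i ∈ ({i : Fin m | k < x i} : Finset (Fin m)), y i) /
            (({i : Fin m | k < x i} : Finset (Fin m)).card : ℝ))
    (ErrorLeft ErrorRight : ℕ → ℝ)
    (hErrorLeft : ∀ k : ℕ, ErrorLeft k =
      ∑ i ∈ ({i : Fin m | x i ≤ k} : Finset (Fin m)), (y i - μ k) ^ 2)
    (hErrorRight : ∀ k : ℕ, ErrorRight k =
      ∑ i ∈ ({i : Fin m | k < x i} : Finset (Fin m)), (y i - γ k) ^ 2)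
    (j : ℕ) (hjN : j ≤ N)
    (hEl : zleft < ErrorLeft j) (hEr : zright < ErrorRight j) :
    ∀ j' : ℕ, j' ≤ N → ¬(ErrorLeft j' ≤ zleft ∧ ErrorRight j' ≤ zright) := by
  -- monotonicity of ErrorLeft
  have hLmono : ∀ k k' : ℕ, k ≤ k' → ErrorLeft k ≤ ErrorLeft k' := by
    intro k k' hkk
    rw [hErrorLeft, hErrorLeft]
    set S := ({i : Fin m | x i ≤ k} : Finset (Fin m)) with hS
    set S' := ({i : Fin m | x i ≤ k'} : Finset (Fin m)) with hS'
    have hsub : S ⊆ S' := by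
      intro i hi
      simp only [hS, hS', Finset.mem_filter, Finset.mem_univ, true_and] at *
      omega
    rcases S.eq_empty_or_nonempty with hE | hne
    · rw [hE]; simp; positivity
    · calc ∑ i ∈ S, (y i - μ k) ^ 2 ≤ ∑ i ∈ S, (y i - μ k') ^ 2 := by
            rw [hμ k hne]; exact mean_min_aux S y (μ k')
        _ ≤ ∑ i ∈ S', (y i - μ k') ^ 2 :=
            Finset.sum_le_sum_of_subset_of_nonneg hsub (fun i _ _ => by positivity)
  have hRmono : ∀ k k' : ℕ, k ≤ k' → ErrorRight k' ≤ ErrorRight k := by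
    intro k k' hkk
    rw [hErrorRight, hErrorRight]
    set S := ({i : Fin m | k' < x i} : Finset (Fin m)) with hS
    set S' := ({i : Fin m | k < x i} : Finset (Fin m)) with hS'
    have hsub : S ⊆ S' := by
      intro i hi
      simp only [hS, hS', Finset.mem_filter, Finset.mem_univ, true_and] at *
      omega
    rcases S.eq_empty_or_nonempty with hE | hne
    · rw [hE]; simp; positivity
    · calc ∑ i ∈ S, (y i - γ k') ^ 2 ≤ ∑ i ∈ S, (y i - γ k) ^ 2 := by
            rw [hγ k' hne]; exact mean_min_aux S y (γ k)
        _ ≤ ∑ i ∈ S', (y i - γ k) ^ 2 :=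
            Finset.sum_le_sum_of_subset_of_nonneg hsub (fun i _ _ => by positivity)
  intro j' _ ⟨hl, hr⟩
  rcases le_total j' j with h | h
  · exact absurd hr (not_le.mpr (lt_of_lt_of_le hEr (hRmono j' j h)))
  · exact absurd hl (not_le.mpr (lt_of_lt_of_le hEl (hLmono j j' h)))
end

section
/- There exists a constant C₀ > 0 such that the following holds for every C ≥ C₀. Fix integers m ≥ 1 and N ≥ 2, reals α ∈ (0,1), observations x_1,…,x_m ∈ {1,…,N}, and set p = C·log N / m^α; assume 0 < p ≤ 1. Let B_1,…,B_m be independent Bernoulli(p) random variables, and for 1 ≤ a ≤ b ≤ N let k_{[a,b]} = ∑_{i : a ≤ x_i ≤ b} B_i and f_{[a,b]} = #{i : a ≤ x_i ≤ b}. Then with probability at least 1 − 1/N, simultaneously for all 1 ≤ a ≤ b ≤ N: (i) if f_{[a,b]} ≥ 4·m^α then k_{[a,b]}/p ≥ 2·m^α, and (ii) if f_{[a,b]} ≤ m^α/8 then k_{[a,b]}/p ≤ m^α. -/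
open Finset MeasureTheory ProbabilityTheory

section helpers
set_option linter.unusedSectionVars false
variable {Ω : Type} [MeasurableSpace Ω] {Pr : Measure Ω} [IsProbabilityMeasure Pr]

lemma bern_exp_eq (t : ℝ) {B : Ω → ℝ} (h01 : ∀ ω, B ω = 0 ∨ B ω = 1) (ω : Ω) :
    Real.exp (t * B ω) = 1 + (Real.exp t - 1) * B ω := by
  rcases h01 ω with h | h <;> simp [h]

lemma bern_integrable {B : Ω → ℝ} (hm : Measurable B) (h01 : ∀ ω, B ω = 0 ∨ B ω = 1) :
    Integrable B Pr := by
  have hS : MeasurableSet {ω | B ω = 1} := hm (measurableSet_singleton 1)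
  have hBi : B = Set.indicator {ω | B ω = 1} (fun _ => (1:ℝ)) := by
    funext ω; rcases h01 ω with h | h <;> simp [Set.indicator_apply, h]
  rw [hBi]
  exact (integrable_const (1:ℝ)).indicator hS

lemma bern_integral {B : Ω → ℝ} (hm : Measurable B) (h01 : ∀ ω, B ω = 0 ∨ B ω = 1)
    {p : ℝ} (hp0 : 0 ≤ p) (hp : Pr {ω | B ω = 1} = ENNReal.ofReal p) :
    ∫ ω, B ω ∂Pr = p := by
  have hS : MeasurableSet {ω | B ω = 1} := hm (measurableSet_singleton 1)
  have hBi : B = Set.indicator {ω | B ω = 1} (fun _ => (1:ℝ)) := by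
    funext ω; rcases h01 ω with h | h <;> simp [Set.indicator_apply, h]
  rw [hBi, integral_indicator_const _ hS, measureReal_def, hp, ENNReal.toReal_ofReal hp0]
  simp

lemma bern_exp_integrable (t : ℝ) {B : Ω → ℝ} (hm : Measurable B)
    (h01 : ∀ ω, B ω = 0 ∨ B ω = 1) :
    Integrable (fun ω => Real.exp (t * B ω)) Pr := by
  have h : (fun ω => Real.exp (t * B ω)) = fun ω => 1 + (Real.exp t - 1) * B ω :=
    funext (bern_exp_eq t h01)
  rw [h]
  exact (integrable_const 1).add ((bern_integrable hm h01).const_mul _)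

lemma bern_mgf (t : ℝ) {B : Ω → ℝ} (hm : Measurable B) (h01 : ∀ ω, B ω = 0 ∨ B ω = 1)
    {p : ℝ} (hp0 : 0 ≤ p) (hp : Pr {ω | B ω = 1} = ENNReal.ofReal p) :
    mgf B Pr t = 1 + p * (Real.exp t - 1) := by
  show (∫ ω, Real.exp (t * B ω) ∂Pr) = _
  calc (∫ ω, Real.exp (t * B ω) ∂Pr) = ∫ ω, (1 + (Real.exp t - 1) * B ω) ∂Pr := by
        congr 1; funext ω; exact bern_exp_eq t h01 ω
    _ = (∫ _ω, (1:ℝ) ∂Pr) + ∫ ω, (Real.exp t - 1) * B ω ∂Pr :=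
        integral_add (integrable_const 1) ((bern_integrable hm h01).const_mul _)
    _ = 1 + (Real.exp t - 1) * p := by
        rw [integral_const, integral_const_mul, bern_integral hm h01 hp0 hp]; simp
    _ = 1 + p * (Real.exp t - 1) := by ring

variable {m : ℕ} {B : Fin m → Ω → ℝ} (hmeas : ∀ i, Measurable (B i))
  (h01 : ∀ i ω, B i ω = 0 ∨ B i ω = 1) {p : ℝ} (hp0 : 0 ≤ p) (hp1 : p ≤ 1)
  (hp : ∀ i, Pr {ω | B i ω = 1} = ENNReal.ofReal p)
  (hind : iIndepFun B Pr)

include hmeas h01 hp0 hp1 hp hind in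
lemma bern_mgf_sum (S : Finset (Fin m)) (t : ℝ) :
    mgf (∑ i ∈ S, B i) Pr t ≤ Real.exp ((S.card : ℝ) * p * (Real.exp t - 1)) := by
  rw [ProbabilityTheory.iIndepFun.mgf_sum hind hmeas]
  have hbase : (0:ℝ) ≤ 1 + p * (Real.exp t - 1) := by
    nlinarith [Real.exp_nonneg t, mul_nonneg hp0 (Real.exp_nonneg t)]
  calc ∏ i ∈ S, mgf (B i) Pr t = ∏ _i ∈ S, (1 + p * (Real.exp t - 1)) :=
        Finset.prod_congr rfl fun i _ => bern_mgf t (hmeas i) (h01 i) hp0 (hp i)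
    _ = (1 + p * (Real.exp t - 1)) ^ S.card := by rw [Finset.prod_const]
    _ ≤ (Real.exp (p * (Real.exp t - 1))) ^ S.card := by
        apply pow_le_pow_left₀ hbase
        linarith [Real.add_one_le_exp (p * (Real.exp t - 1))]
    _ = Real.exp ((S.card : ℝ) * (p * (Real.exp t - 1))) := by
        rw [Real.exp_nat_mul]
    _ = Real.exp ((S.card : ℝ) * p * (Real.exp t - 1)) := by ring_nf

include hmeas h01 hp0 hp1 hp hind in
lemma chernoff_upper (S : Finset (Fin m)) {t : ℝ} (ht : 0 ≤ t) (ε : ℝ) :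
    (Pr {ω | ε ≤ ∑ i ∈ S, B i ω}).toReal ≤
      Real.exp (-t * ε + (S.card : ℝ) * p * (Real.exp t - 1)) := by
  have hint : Integrable (fun ω => Real.exp (t * (∑ i ∈ S, B i) ω)) Pr :=
    ProbabilityTheory.iIndepFun.integrable_exp_mul_sum hind hmeas
      fun i _ => bern_exp_integrable t (hmeas i) (h01 i)
  have h := measure_ge_le_exp_mul_mgf (X := ∑ i ∈ S, B i) (μ := Pr) ε ht hint
  have hset : {ω | ε ≤ ∑ i ∈ S, B i ω} = {ω | ε ≤ (∑ i ∈ S, B i) ω} := by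
    simp [Finset.sum_apply]
  rw [hset, Real.exp_add]
  exact h.trans (by
    have := bern_mgf_sum hmeas h01 hp0 hp1 hp hind S t
    nlinarith [Real.exp_nonneg (-t * ε), mgf_nonneg (X := ∑ i ∈ S, B i) (μ := Pr) (t := t)])

include hmeas h01 hp0 hp1 hp hind in
lemma chernoff_lower (S : Finset (Fin m)) {t : ℝ} (ht : t ≤ 0) (ε : ℝ) :
    (Pr {ω | ∑ i ∈ S, B i ω ≤ ε}).toReal ≤
      Real.exp (-t * ε + (S.card : ℝ) * p * (Real.exp t - 1)) := by
  have hint : Integrable (fun ω => Real.exp (t * (∑ i ∈ S, B i) ω)) Pr :=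
    ProbabilityTheory.iIndepFun.integrable_exp_mul_sum hind hmeas
      fun i _ => bern_exp_integrable t (hmeas i) (h01 i)
  have h := measure_le_le_exp_mul_mgf (X := ∑ i ∈ S, B i) (μ := Pr) ε ht hint
  have hset : {ω | ∑ i ∈ S, B i ω ≤ ε} = {ω | (∑ i ∈ S, B i) ω ≤ ε} := by
    simp [Finset.sum_apply]
  rw [hset, Real.exp_add]
  exact h.trans (by
    have := bern_mgf_sum hmeas h01 hp0 hp1 hp hind S t
    nlinarith [Real.exp_nonneg (-t * ε), mgf_nonneg (X := ∑ i ∈ S, B i) (μ := Pr) (t := t)])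

end helpers

set_option maxHeartbeats 1000000 in
/-- Sampling theorem (Theorem 3 of the paper): sampling each observation
independently with probability `p = C log N / m^α`, with probability at least
`1 − 1/N`, for every range `[a,b] ⊆ [N]`: if the true count is at least `4m^α`
then the scaled sample count is at least `2m^α`, and if the true count is at most
`m^α/8` then the scaled sample count is at most `m^α`. -/
theorem sampling_theorem :
    ∃ C₀ : ℝ, 0 < C₀ ∧ ∀ C : ℝ, C₀ ≤ C →
    ∀ (m N : ℕ), 1 ≤ m → 2 ≤ N →
    ∀ α : ℝ, 0 < α → α < 1 →
    ∀ x : Fin m → ℕ, (∀ i, 1 ≤ x i ∧ x i ≤ N) →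
    ∀ p : ℝ, p = C * Real.log N / (m : ℝ) ^ α → 0 < p → p ≤ 1 →
    ∀ (Ω : Type) (_ : MeasurableSpace Ω) (Pr : Measure Ω), IsProbabilityMeasure Pr →
    ∀ B : Fin m → Ω → ℝ,
      (∀ i, Measurable (B i)) →
      (∀ i ω, B i ω = 0 ∨ B i ω = 1) →
      (∀ i, Pr {ω | B i ω = 1} = ENNReal.ofReal p) →
      iIndepFun B Pr →
    1 - 1 / (N : ℝ) ≤
      (Pr {ω | ∀ a b : ℕ, 1 ≤ a → a ≤ b → b ≤ N →
        ((4 * (m : ℝ) ^ α ≤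
            ((({i : Fin m | a ≤ x i ∧ x i ≤ b} : Finset (Fin m)).card : ℝ)) →
          2 * (m : ℝ) ^ α ≤
            (∑ i ∈ ({i : Fin m | a ≤ x i ∧ x i ≤ b} : Finset (Fin m)), B i ω) / p) ∧
         ((({i : Fin m | a ≤ x i ∧ x i ≤ b} : Finset (Fin m)).card : ℝ) ≤
            (m : ℝ) ^ α / 8 →
          (∑ i ∈ ({i : Fin m | a ≤ x i ∧ x i ≤ b} : Finset (Fin m)), B i ω) / p ≤
            (m : ℝ) ^ α))}).toReal := by
  refine ⟨100, by norm_num, ?_⟩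
  intro C hC m N hm hN α hα0 hα1 x hx p hpeq hp0 hp1 Ω mΩ Pr hPr B hBmeas hB01 hBp hind
  set S : ℕ → ℕ → Finset (Fin m) :=
    fun a b => ({i : Fin m | a ≤ x i ∧ x i ≤ b} : Finset (Fin m)) with hSdef
  set Mα : ℝ := (m : ℝ) ^ α with hMαdef
  have hm0 : (0:ℝ) < m := by exact_mod_cast hm
  have hMα0 : 0 < Mα := Real.rpow_pos_of_pos hm0 α
  have hN2 : (2:ℝ) ≤ N := by exact_mod_cast hN
  have hN0 : (0:ℝ) < N := by linarith
  have hlogN : 0 < Real.log N := Real.log_pos (by linarith)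
  set L : ℝ := p * Mα with hLdef
  have hL : L = C * Real.log N := by
    rw [hLdef, hpeq]; field_simp
  have hL100 : 100 * Real.log N ≤ L := by
    rw [hL]; nlinarith
  have hL0 : 0 < L := by nlinarith
  have hsummeas : ∀ a b : ℕ, Measurable (fun ω => ∑ i ∈ S a b, B i ω) :=
    fun a b => Finset.measurable_sum _ fun i _ => hBmeas i
  -- bad events
  set F1 : ℕ → ℕ → Set Ω := fun a b =>
    {ω | 4 * Mα ≤ ((S a b).card : ℝ) ∧ ∑ i ∈ S a b, B i ω ≤ 2 * L} with hF1def
  set F2 : ℕ → ℕ → Set Ω := fun a b =>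
    {ω | ((S a b).card : ℝ) ≤ Mα / 8 ∧ L ≤ ∑ i ∈ S a b, B i ω} with hF2def
  have hexpbound : Real.exp (-(L/2)) ≤ ((N:ℝ)^50)⁻¹ := by
    have h1 : Real.exp (-(L/2)) ≤ Real.exp (-(50 * Real.log N)) :=
      Real.exp_le_exp.mpr (by linarith)
    have h2 : Real.exp (-(50 * Real.log N)) = ((N:ℝ)^50)⁻¹ := by
      rw [Real.exp_neg, show (50:ℝ) * Real.log N = ((50:ℕ):ℝ) * Real.log N by norm_num,
        Real.exp_nat_mul, Real.exp_log hN0]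
    linarith [h2 ▸ h1]
  have hF1 : ∀ a b : ℕ, Pr (F1 a b) ≤ ENNReal.ofReal (Real.exp (-(L/2))) := by
    intro a b
    by_cases hc : 4 * Mα ≤ ((S a b).card : ℝ)
    · have he : F1 a b = {ω | ∑ i ∈ S a b, B i ω ≤ 2 * L} := by
        ext ω; simp [hF1def, hc]
      rw [he, ENNReal.le_ofReal_iff_toReal_le (measure_ne_top _ _) (Real.exp_nonneg _)]
      refine (chernoff_lower hBmeas hB01 hp0.le hp1 hBp hind (S a b)
        (t := -Real.log 2) (neg_nonpos.mpr (Real.log_nonneg (by norm_num))) (2 * L)).trans ?_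
      apply Real.exp_le_exp.mpr
      rw [Real.exp_neg, Real.exp_log (by norm_num : (0:ℝ) < 2)]
      have hnp : 4 * L ≤ ((S a b).card : ℝ) * p := by
        calc 4 * L = (4 * Mα) * p := by rw [hLdef]; ring
        _ ≤ ((S a b).card : ℝ) * p := mul_le_mul_of_nonneg_right hc hp0.le
      have hlog2 := Real.log_two_lt_d9
      nlinarith [hL0.le]
    · have he : F1 a b = ∅ := by
        ext ω; simp [hF1def, hc]
      simp [he]
  have hF2 : ∀ a b : ℕ, Pr (F2 a b) ≤ ENNReal.ofReal (Real.exp (-(L/2))) := by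
    intro a b
    by_cases hc : ((S a b).card : ℝ) ≤ Mα / 8
    · have he : F2 a b = {ω | L ≤ ∑ i ∈ S a b, B i ω} := by
        ext ω; simp [hF2def, hc]
      rw [he, ENNReal.le_ofReal_iff_toReal_le (measure_ne_top _ _) (Real.exp_nonneg _)]
      refine (chernoff_upper hBmeas hB01 hp0.le hp1 hBp hind (S a b)
        (t := Real.log 8) (Real.log_nonneg (by norm_num)) L).trans ?_
      apply Real.exp_le_exp.mpr
      rw [Real.exp_log (by norm_num : (0:ℝ) < 8)]
      have hnp : ((S a b).card : ℝ) * p ≤ L / 8 := by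
        calc ((S a b).card : ℝ) * p ≤ (Mα / 8) * p := mul_le_mul_of_nonneg_right hc hp0.le
        _ = L / 8 := by rw [hLdef]; ring
      have hlog8 : (11:ℝ)/8 ≤ Real.log 8 := by
        have h8 : ((2:ℝ))^(3:ℕ) = 8 := by norm_num
        have := Real.log_two_gt_d9
        rw [← h8, Real.log_pow]
        push_cast
        nlinarith
      nlinarith [hnp, mul_le_mul_of_nonneg_right hlog8 hL0.le]
    · have he : F2 a b = ∅ := by
        ext ω; simp [hF2def, hc]
      simp [he]
  set G : Set Ω := {ω | ∀ a b : ℕ, 1 ≤ a → a ≤ b → b ≤ N →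
      ((4 * Mα ≤ (((S a b).card : ℝ)) →
        2 * Mα ≤ (∑ i ∈ S a b, B i ω) / p) ∧
       (((S a b).card : ℝ) ≤ Mα / 8 →
        (∑ i ∈ S a b, B i ω) / p ≤ Mα))} with hGdef
  have himp : ∀ (P : Prop) (Q : Set Ω), MeasurableSet Q → MeasurableSet {ω | P → ω ∈ Q} := by
    intro P Q hQ
    by_cases hP : P
    · simpa [hP] using hQ
    · simp [hP]
  have hGmeas : MeasurableSet G := by
    have hEq : G = ⋂ (a : ℕ), ⋂ (b : ℕ), {ω | 1 ≤ a → a ≤ b → b ≤ N →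
        ((4 * Mα ≤ (((S a b).card : ℝ)) → 2 * Mα ≤ (∑ i ∈ S a b, B i ω) / p) ∧
         (((S a b).card : ℝ) ≤ Mα / 8 → (∑ i ∈ S a b, B i ω) / p ≤ Mα))} := by
      ext ω; simp only [hGdef, Set.mem_setOf_eq, Set.mem_iInter]
    rw [hEq]
    refine MeasurableSet.iInter fun a => MeasurableSet.iInter fun b => ?_
    refine himp _ _ (himp _ _ (himp _ _ ?_))
    have h1 : MeasurableSet {ω | 2 * Mα ≤ (∑ i ∈ S a b, B i ω) / p} :=
      measurableSet_le measurable_const ((hsummeas a b).div_const p)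
    have h2 : MeasurableSet {ω | (∑ i ∈ S a b, B i ω) / p ≤ Mα} :=
      measurableSet_le ((hsummeas a b).div_const p) measurable_const
    exact (himp _ _ h1).inter (himp _ _ h2)
  have hsub : Gᶜ ⊆ ⋃ a ∈ Finset.range (N+1), ⋃ b ∈ Finset.range (N+1), (F1 a b ∪ F2 a b) := by
    intro ω hω
    simp only [hGdef, Set.mem_compl_iff, Set.mem_setOf_eq] at hω
    push_neg at hω
    obtain ⟨a, b, h1, h2, h3, hbad⟩ := hω
    have hmem : ∀ T : Set Ω, ω ∈ T →
        ω ∈ ⋃ a' ∈ Finset.range (N+1), ⋃ b' ∈ Finset.range (N+1), (F1 a' b' ∪ F2 a' b') →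
        True := fun _ _ _ => trivial
    simp only [Set.mem_iUnion, Finset.mem_range, exists_prop]
    refine ⟨a, by omega, b, by omega, ?_⟩
    by_cases hA : (4 * Mα ≤ (((S a b).card : ℝ)) → 2 * Mα ≤ (∑ i ∈ S a b, B i ω) / p)
    · obtain ⟨hc2, hlt⟩ := hbad hA
      right
      refine ⟨hc2, ?_⟩
      have hs : Mα * p < ∑ i ∈ S a b, B i ω := (lt_div_iff₀ hp0).mp hlt
      have : L = Mα * p := by rw [hLdef]; ring
      linarith
    · push_neg at hA
      obtain ⟨hc1, hlt⟩ := hA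
      left
      refine ⟨hc1, ?_⟩
      have hs : (∑ i ∈ S a b, B i ω) < 2 * Mα * p := by
        have := (div_lt_iff₀ hp0).mp hlt
        linarith
      have : 2 * L = 2 * Mα * p := by rw [hLdef]; ring
      linarith
  have hPrC : Pr Gᶜ ≤ ENNReal.ofReal (1 / N) := by
    have e : ENNReal.ofReal (Real.exp (-(L/2))) + ENNReal.ofReal (Real.exp (-(L/2)))
        = ENNReal.ofReal (2 * Real.exp (-(L/2))) := by
      rw [← ENNReal.ofReal_add (Real.exp_nonneg _) (Real.exp_nonneg _)]; ring_nf
    calc Pr Gᶜ ≤ Pr (⋃ a ∈ Finset.range (N+1), ⋃ b ∈ Finset.range (N+1), (F1 a b ∪ F2 a b)) :=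
          measure_mono hsub
      _ ≤ ∑ a ∈ Finset.range (N+1), Pr (⋃ b ∈ Finset.range (N+1), (F1 a b ∪ F2 a b)) :=
          measure_biUnion_finset_le _ _
      _ ≤ ∑ a ∈ Finset.range (N+1), ∑ b ∈ Finset.range (N+1), Pr (F1 a b ∪ F2 a b) :=
          Finset.sum_le_sum fun a _ => measure_biUnion_finset_le _ _
      _ ≤ ∑ _a ∈ Finset.range (N+1), ∑ _b ∈ Finset.range (N+1),
            ENNReal.ofReal (2 * Real.exp (-(L/2))) := by
          refine Finset.sum_le_sum fun a _ => Finset.sum_le_sum fun b _ => ?_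
          refine (measure_union_le _ _).trans ?_
          rw [← e]; exact add_le_add (hF1 a b) (hF2 a b)
      _ = ((N+1 : ℕ) : ENNReal) * (((N+1 : ℕ) : ENNReal) * ENNReal.ofReal (2 * Real.exp (-(L/2)))) := by
          simp [Finset.sum_const, Finset.card_range, nsmul_eq_mul, mul_assoc]
      _ ≤ ENNReal.ofReal (1 / N) := by
          rw [(ENNReal.ofReal_natCast (N+1)).symm,
            ← ENNReal.ofReal_mul (by positivity), ← ENNReal.ofReal_mul (by positivity)]
          apply ENNReal.ofReal_le_ofReal
          push_cast
          have h50 : (0:ℝ) < (N:ℝ)^50 := by positivity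
          have hb : (N:ℝ)+1 ≤ (N:ℝ)^2 := by nlinarith
          have h6 : (N:ℝ)^6 ≤ (N:ℝ)^50 := pow_le_pow_right₀ (by linarith) (by norm_num)
          have key : ((N:ℝ)+1) * (((N:ℝ)+1) * (2 * ((N:ℝ)^50)⁻¹)) ≤ 1 / N := by
            rw [le_div_iff₀ hN0]
            calc ((N:ℝ)+1) * (((N:ℝ)+1) * (2 * ((N:ℝ)^50)⁻¹)) * N
                = (2 * N * ((N:ℝ)+1)^2) * ((N:ℝ)^50)⁻¹ := by ring
              _ ≤ (N:ℝ)^50 * ((N:ℝ)^50)⁻¹ := by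
                  apply mul_le_mul_of_nonneg_right _ (by positivity)
                  calc 2 * (N:ℝ) * ((N:ℝ)+1)^2 ≤ 2 * (N:ℝ) * ((N:ℝ)^2)^2 := by
                        apply mul_le_mul_of_nonneg_left _ (by positivity)
                        exact pow_le_pow_left₀ (by linarith) hb 2
                    _ = 2 * (N:ℝ)^5 := by ring
                    _ ≤ (N:ℝ) * (N:ℝ)^5 := mul_le_mul_of_nonneg_right hN2 (by positivity)
                    _ = (N:ℝ)^6 := by ring
                    _ ≤ (N:ℝ)^50 := h6
              _ = 1 := mul_inv_cancel₀ h50.ne'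
          calc ((N:ℝ)+1) * (((N:ℝ)+1) * (2 * Real.exp (-(L/2))))
              ≤ ((N:ℝ)+1) * (((N:ℝ)+1) * (2 * ((N:ℝ)^50)⁻¹)) := by
                apply mul_le_mul_of_nonneg_left _ (by linarith)
                apply mul_le_mul_of_nonneg_left _ (by linarith)
                linarith [hexpbound]
            _ ≤ 1 / N := key
  have hGc : (Pr Gᶜ).toReal ≤ 1 / N := by
    have h := ENNReal.toReal_mono ENNReal.ofReal_ne_top hPrC
    rwa [ENNReal.toReal_ofReal (by positivity)] at h
  have hsum1 : (Pr G).toReal + (Pr Gᶜ).toReal = 1 := by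
    rw [← ENNReal.toReal_add (measure_ne_top _ _) (measure_ne_top _ _),
      measure_add_measure_compl hGmeas, measure_univ, ENNReal.toReal_one]
  linarith
end
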